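/- Multi-ion discrete mass conservation: for each species i, if (c_i^{m+1} − c_i^m)/Δt = Δ_h c_i^{m+1/2} + z_i[δ_x(c_i^m δ_x φ^{m+1/2}) + δ_y(c_i^m δ_y φ^{m+1/2})] at all interior points, with zero-Neumann ghost-cell conditions on c_i^m, c_i^{m+1}, φ^m, φ^{m+1}, then ∑_{j=1}^{Nx}∑_{k=1}^{Ny} (c_i)^{m+1}_{j,k} = ∑_{j=1}^{Nx}∑_{k=1}^{Ny} (c_i)^m_{j,k}. -/

import Mathlib

open Finset

noncomputable section

/-- 5-point discrete Laplacian. -/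
def dlap (dx dy : ℝ) (u : ℕ → ℕ → ℝ) (j k : ℕ) : ℝ :=
  (u (j+1) k - 2 * u j k + u (j-1) k) / dx^2 +
  (u j (k+1) - 2 * u j k + u j (k-1)) / dy^2

/-- δ_x(w δ_x u) with interface averages. -/
def ddriftx (dx : ℝ) (w u : ℕ → ℕ → ℝ) (j k : ℕ) : ℝ :=
  ((w j k + w (j+1) k)/2 * (u (j+1) k - u j k)
    - (w (j-1) k + w j k)/2 * (u j k - u (j-1) k)) / dx^2

/-- δ_y(w δ_y u) with interface averages. -/
def ddrifty (dy : ℝ) (w u : ℕ → ℕ → ℝ) (j k : ℕ) : ℝ :=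
  ((w j k + w j (k+1))/2 * (u j (k+1) - u j k)
    - (w j (k-1) + w j k)/2 * (u j k - u j (k-1))) / dy^2

/-- Zero-Neumann (reflection) ghost-cell conditions. -/
def Ghost (Nx Ny : ℕ) (f : ℕ → ℕ → ℝ) : Prop :=
  (∀ k, f 0 k = f 1 k) ∧ (∀ k, f (Nx+1) k = f Nx k) ∧
  (∀ j, f j 0 = f j 1) ∧ (∀ j, f j (Ny+1) = f j Ny)

/-- Discrete L² inner product over interior cells. -/
def ipd (Nx Ny : ℕ) (dx dy : ℝ) (f g : ℕ → ℕ → ℝ) : ℝ :=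
  ∑ j ∈ Icc 1 Nx, ∑ k ∈ Icc 1 Ny, f j k * g j k * (dx * dy)

/-- Discrete gradient norm squared ‖∇_h f‖². -/
def gradsq (Nx Ny : ℕ) (dx dy : ℝ) (f : ℕ → ℕ → ℝ) : ℝ :=
  ∑ j ∈ Icc 1 Nx, ∑ k ∈ Icc 1 Ny,
    (((f (j+1) k - f j k)/dx)^2 + ((f j (k+1) - f j k)/dy)^2) * (dx * dy)

lemma tele (N : ℕ) (g : ℕ → ℝ) : ∑ j ∈ Icc 1 N, (g j - g (j-1)) = g N - g 0 := by
  induction N with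
  | zero => simp
  | succ n ih =>
    rw [Finset.sum_Icc_succ_top (by omega), ih]
    simp

/-- Multi-ion discrete mass conservation for each species. -/
theorem multiion_discrete_mass_conservation (Nx Ny : ℕ) (dx dy dt : ℝ)
    (hdx : 0 < dx) (hdy : 0 < dy) (hdt : 0 < dt) (z : ℝ)
    (c0 c1 φ0 φ1 : ℕ → ℕ → ℝ)
    (hgc0 : Ghost Nx Ny c0) (hgc1 : Ghost Nx Ny c1)
    (hgφ0 : Ghost Nx Ny φ0) (hgφ1 : Ghost Nx Ny φ1)
    (hscheme : ∀ j ∈ Icc 1 Nx, ∀ k ∈ Icc 1 Ny,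
      (c1 j k - c0 j k)/dt =
        dlap dx dy (fun j k => (c0 j k + c1 j k)/2) j k
        + z * (ddriftx dx c0 (fun j k => (φ0 j k + φ1 j k)/2) j k
                + ddrifty dy c0 (fun j k => (φ0 j k + φ1 j k)/2) j k)) :
    ∑ j ∈ Icc 1 Nx, ∑ k ∈ Icc 1 Ny, c1 j k
      = ∑ j ∈ Icc 1 Nx, ∑ k ∈ Icc 1 Ny, c0 j k := by
  set u : ℕ → ℕ → ℝ := fun j k => (c0 j k + c1 j k)/2 with hu
  set ψ : ℕ → ℕ → ℝ := fun j k => (φ0 j k + φ1 j k)/2 with hψ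
  set P : ℕ → ℕ → ℝ := fun j k =>
    ((u (j+1) k - u j k) + z * ((c0 j k + c0 (j+1) k)/2 * (ψ (j+1) k - ψ j k)))/dx^2 with hP
  set Q : ℕ → ℕ → ℝ := fun j k =>
    ((u j (k+1) - u j k) + z * ((c0 j k + c0 j (k+1))/2 * (ψ j (k+1) - ψ j k)))/dy^2 with hQ
  have hflux : ∀ j ∈ Icc 1 Nx, ∀ k ∈ Icc 1 Ny,
      c1 j k - c0 j k = dt * ((P j k - P (j-1) k) + (Q j k - Q j (k-1))) := by
    intro j hj k hk
    have hj1 : 1 ≤ j := (mem_Icc.mp hj).1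
    have hk1 : 1 ≤ k := (mem_Icc.mp hk).1
    obtain ⟨j', rfl⟩ : ∃ j', j = j' + 1 := ⟨j - 1, by omega⟩
    obtain ⟨k', rfl⟩ : ∃ k', k = k' + 1 := ⟨k - 1, by omega⟩
    have h := hscheme _ hj _ hk
    rw [div_eq_iff (ne_of_gt hdt)] at h
    rw [h, hP, hQ]
    simp only [Nat.add_sub_cancel, dlap, ddriftx, ddrifty, hu, hψ]
    ring
  have hP0 : ∀ k, P 0 k = 0 := by
    intro k
    simp only [hP, hu, hψ, zero_add, hgc0.1 k, hgc1.1 k, hgφ0.1 k, hgφ1.1 k]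
    ring
  have hPN : ∀ k, P Nx k = 0 := by
    intro k
    simp only [hP, hu, hψ, hgc0.2.1 k, hgc1.2.1 k, hgφ0.2.1 k, hgφ1.2.1 k]
    ring
  have hQ0 : ∀ j, Q j 0 = 0 := by
    intro j
    simp only [hQ, hu, hψ, zero_add, hgc0.2.2.1 j, hgc1.2.2.1 j, hgφ0.2.2.1 j, hgφ1.2.2.1 j]
    ring
  have hQN : ∀ j, Q j Ny = 0 := by
    intro j
    simp only [hQ, hu, hψ, hgc0.2.2.2 j, hgc1.2.2.2 j, hgφ0.2.2.2 j, hgφ1.2.2.2 j]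
    ring
  have key : ∑ j ∈ Icc 1 Nx, ∑ k ∈ Icc 1 Ny, (c1 j k - c0 j k) = 0 := by
    have h1 : ∑ j ∈ Icc 1 Nx, ∑ k ∈ Icc 1 Ny, (c1 j k - c0 j k)
        = dt * (∑ j ∈ Icc 1 Nx, ∑ k ∈ Icc 1 Ny,
            ((P j k - P (j-1) k) + (Q j k - Q j (k-1)))) := by
      rw [Finset.mul_sum]
      refine Finset.sum_congr rfl fun j hj => ?_
      rw [Finset.mul_sum]
      exact Finset.sum_congr rfl fun k hk => hflux j hj k hk
    rw [h1]
    have h2 : ∑ j ∈ Icc 1 Nx, ∑ k ∈ Icc 1 Ny,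
        ((P j k - P (j-1) k) + (Q j k - Q j (k-1)))
        = (∑ k ∈ Icc 1 Ny, ∑ j ∈ Icc 1 Nx, (P j k - P (j-1) k))
          + ∑ j ∈ Icc 1 Nx, ∑ k ∈ Icc 1 Ny, (Q j k - Q j (k-1)) := by
      rw [← Finset.sum_comm (f := fun j k => P j k - P (j-1) k)]
      rw [← Finset.sum_add_distrib]
      exact Finset.sum_congr rfl fun j _ => Finset.sum_add_distrib
    rw [h2]
    have h3 : ∀ k, ∑ j ∈ Icc 1 Nx, (P j k - P (j-1) k) = 0 := fun k => by
      rw [tele Nx (fun j => P j k), hPN k, hP0 k, sub_zero]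
    have h4 : ∀ j, ∑ k ∈ Icc 1 Ny, (Q j k - Q j (k-1)) = 0 := fun j => by
      rw [tele Ny (fun k => Q j k), hQN j, hQ0 j, sub_zero]
    simp [h3, h4]
  have h5 : ∑ j ∈ Icc 1 Nx, ∑ k ∈ Icc 1 Ny, (c1 j k - c0 j k)
      = (∑ j ∈ Icc 1 Nx, ∑ k ∈ Icc 1 Ny, c1 j k)
        - ∑ j ∈ Icc 1 Nx, ∑ k ∈ Icc 1 Ny, c0 j k := by
    rw [← Finset.sum_sub_distrib]
    exact Finset.sum_congr rfl fun j _ => Finset.sum_sub_distrib _ _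
  rw [h5] at key
  linarith
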